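/- Let m ≥ 2, n ≥ 2, let r_crit be a minimizer of χ(r) = (1 - (1 - r^{1/m})^{1/n}) / r on (0,1] with r_crit ∈ (0,1), and set x_crit = χ(r_crit). Then the reliability function ρ (largest fixed point of r = (1-(1-xr)^n)^m) is discontinuous at x_crit: ρ(x) = 0 for all x < x_crit while ρ(x_crit) ≥ r_crit > 0. -/

import Mathlib

private lemma pow_rpow_inv (a : ℝ) (ha : 0 ≤ a) (k : ℕ) (hk : k ≠ 0) :
    (a ^ k) ^ ((1:ℝ) / (k:ℝ)) = a := by
  rw [← Real.rpow_natCast a k, ← Real.rpow_mul ha]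
  rw [mul_one_div_cancel (by exact_mod_cast hk), Real.rpow_one]

private lemma rpow_inv_pow (b : ℝ) (hb : 0 ≤ b) (k : ℕ) (hk : k ≠ 0) :
    (b ^ ((1:ℝ) / (k:ℝ))) ^ k = b := by
  rw [← Real.rpow_natCast (b ^ ((1:ℝ)/(k:ℝ))) k, ← Real.rpow_mul hb]
  rw [one_div_mul_cancel (by exact_mod_cast hk), Real.rpow_one]

/-- For `m, n ≥ 2`, if `r_crit ∈ (0,1)` minimizes
`χ(r) = (1 - (1 - r^{1/m})^{1/n}) / r` on `(0,1]` and `x_crit = χ(r_crit)`, then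
the reliability `ρ` (largest fixed point) satisfies `ρ(x) = 0` for `x < x_crit`
while `ρ(x_crit) ≥ r_crit > 0`: a discontinuity at `x_crit`. -/
theorem stmt9 (m n : ℕ) (hm : 2 ≤ m) (hn : 2 ≤ n)
    (χ : ℝ → ℝ)
    (hχ : ∀ r ∈ Set.Ioc (0:ℝ) 1,
      χ r = (1 - (1 - r ^ ((1:ℝ) / (m:ℝ))) ^ ((1:ℝ) / (n:ℝ))) / r)
    (rcrit : ℝ) (hrc : rcrit ∈ Set.Ioo (0:ℝ) 1)
    (hmin : ∀ r ∈ Set.Ioc (0:ℝ) 1, χ rcrit ≤ χ r)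
    (xcrit : ℝ) (hxc : xcrit = χ rcrit)
    (ρ : ℝ → ℝ)
    (hρ : ∀ x : ℝ, IsGreatest
      {r | r ∈ Set.Icc (0:ℝ) 1 ∧ r = (1 - (1 - x * r) ^ n) ^ m} (ρ x)) :
    (∀ x ∈ Set.Icc (0:ℝ) 1, x < xcrit → ρ x = 0) ∧ rcrit ≤ ρ xcrit ∧ 0 < rcrit := by
  have hm0 : m ≠ 0 := by omega
  have hn0 : n ≠ 0 := by omega
  obtain ⟨hrc0, hrc1⟩ := hrc
  -- Any fixed point r ∈ (0,1] at parameter x ∈ [0,1] satisfies x = χ r.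
  have key : ∀ x ∈ Set.Icc (0:ℝ) 1, ∀ r, 0 < r → r ≤ 1 →
      r = (1 - (1 - x * r) ^ n) ^ m → x = χ r := by
    intro x ⟨hx0, hx1⟩ r hr0 hr1 hfix
    set t := 1 - x * r with ht
    have hxr0 : 0 ≤ x * r := mul_nonneg hx0 hr0.le
    have hxr1 : x * r ≤ 1 := mul_le_one₀ hx1 hr0.le hr1
    have ht0 : 0 ≤ t := by simp [ht]; linarith
    have ht1 : t ≤ 1 := by simp [ht]; linarith
    have htn1 : t ^ n ≤ 1 := pow_le_one₀ ht0 ht1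
    have htn0 : 0 ≤ (1:ℝ) - t ^ n := by linarith
    have h1 : r ^ ((1:ℝ)/(m:ℝ)) = 1 - t ^ n := by
      rw [hfix]; exact pow_rpow_inv _ htn0 m hm0
    have h2 : (1 - r ^ ((1:ℝ)/(m:ℝ))) ^ ((1:ℝ)/(n:ℝ)) = t := by
      rw [h1]
      have : (1:ℝ) - (1 - t ^ n) = t ^ n := by ring
      rw [this]
      exact pow_rpow_inv _ ht0 n hn0
    rw [hχ r ⟨hr0, hr1⟩, h2]
    field_simp [ht]
    linarith
  refine ⟨?_, ?_, hrc0⟩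
  · intro x hx hxlt
    have hg := hρ x
    obtain ⟨⟨⟨hρ0, hρ1⟩, hρfix⟩, _⟩ := hg
    by_contra h
    have hρpos : 0 < ρ x := lt_of_le_of_ne hρ0 (Ne.symm h)
    have := key x hx (ρ x) hρpos hρ1 hρfix
    have hge : xcrit ≤ x := by
      rw [hxc, this]; exact hmin (ρ x) ⟨hρpos, hρ1⟩
    linarith
  · -- rcrit is a fixed point at xcrit
    have hxcr : xcrit * rcrit = 1 - (1 - rcrit ^ ((1:ℝ)/(m:ℝ))) ^ ((1:ℝ)/(n:ℝ)) := by
      rw [hxc, hχ rcrit ⟨hrc0, hrc1.le⟩]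
      field_simp
    have hb0 : 0 ≤ 1 - rcrit ^ ((1:ℝ)/(m:ℝ)) := by
      have : rcrit ^ ((1:ℝ)/(m:ℝ)) ≤ 1 :=
        Real.rpow_le_one hrc0.le hrc1.le (by positivity)
      linarith
    have hfix : rcrit = (1 - (1 - xcrit * rcrit) ^ n) ^ m := by
      rw [hxcr]
      have h3 : (1:ℝ) - (1 - (1 - rcrit ^ ((1:ℝ)/(m:ℝ))) ^ ((1:ℝ)/(n:ℝ))) =
          (1 - rcrit ^ ((1:ℝ)/(m:ℝ))) ^ ((1:ℝ)/(n:ℝ)) := by ring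
      rw [h3, rpow_inv_pow _ hb0 n hn0]
      have h4 : (1:ℝ) - (1 - rcrit ^ ((1:ℝ)/(m:ℝ))) = rcrit ^ ((1:ℝ)/(m:ℝ)) := by ring
      rw [h4, rpow_inv_pow _ hrc0.le m hm0]
    exact (hρ xcrit).2 ⟨⟨hrc0.le, hrc1.le⟩, hfix⟩
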